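/- arXiv:1604.02530 — 15 statements merged into one kernel-verified Lean document; each statement's English description precedes it below -/
import Mathlib

section
/- Suppose y(f) ≠ 0 and y(f+δ) ≠ 0, that L₂(f) = 0, which (since the ȳ-term drops out at x = f) reads (f-g-v)·y(f+δ) = (f-g)·y(f), and that for some ǧ ∈ ℂ the backward-shifted third Lax relation holds at x = f+δ, namely A(f)·(f-ǧ)·y(f+δ) = B(f)·(f-ǧ-v-δ)·y(f). Then the first d-E₇⁽¹⁾ evolution equation holds: (f-g-v)·(f-ǧ-v-δ)·B(f) = (f-g)·(f-ǧ)·A(f). -/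
/-- At `x = f`, eliminating `y(x)` and `y(x+δ)` from `L₂(x) = 0` and the
backward-shifted third Lax relation gives the first d-E₇⁽¹⁾ evolution equation. -/
theorem dE7_first_evolution_equation
    (δ a₁ a₂ a₃ a₄ b₁ b₂ b₃ b₄ : ℂ)
    (hcons : a₁ - a₂ - a₃ + a₄ + b₁ + b₂ - b₃ + b₄ + δ = 0)
    (v : ℂ) (hv : v = a₁ + a₄ - b₃)
    (A B : ℂ → ℂ)
    (hA : ∀ x, A x = (x - a₁) * (x - a₂) * (x - a₃) * (x - a₄))
    (hB : ∀ x, B x = (x - b₁) * (x - b₂) * (x - b₃) * (x - b₄))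
    (f g gcheck : ℂ) (y : ℂ → ℂ)
    (hy0 : y f ≠ 0) (hy1 : y (f + δ) ≠ 0)
    (hL2 : (f - g - v) * y (f + δ) = (f - g) * y f)
    (hL3 : A f * (f - gcheck) * y (f + δ) = B f * (f - gcheck - v - δ) * y f) :
    (f - g - v) * (f - gcheck - v - δ) * B f = (f - g) * (f - gcheck) * A f := by
  have h := mul_right_cancel₀ (mul_ne_zero hy0 hy1)
    (a := (f - g - v) * (f - gcheck - v - δ) * B f)
    (b := y f * y (f + δ)) (c := (f - g) * (f - gcheck) * A f)
  apply h
  linear_combination ((f - gcheck - v - δ) * B f * y f) * hL2 - ((f - g) * y f) * hL3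
end

section
/- Suppose v·(v-δ) ≠ 0, y(g+δ) ≠ 0, y(g+v) ≠ 0, and that the four Lax relations L₂(g) = 0, L₃(g+δ) = 0, L₂(g+v) = 0 and L₃(g+v) = 0 hold. Then the second d-E₇⁽¹⁾ evolution equation holds: (f-g-v)·(f̄-g-v+δ)·B(g) = (f-g)·(f̄-g)·A(g+v). -/
noncomputable section
set_option maxRecDepth 8000

/-- `A(x) = (x-a₁)(x-a₂)(x-a₃)(x-a₄)`. -/
def Apoly (a₁ a₂ a₃ a₄ x : ℂ) : ℂ := (x - a₁) * (x - a₂) * (x - a₃) * (x - a₄)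

/-- `B(x) = (x-b₁)(x-b₂)(x-b₃)(x-b₄)`. -/
def Bpoly (b₁ b₂ b₃ b₄ x : ℂ) : ℂ := (x - b₁) * (x - b₂) * (x - b₃) * (x - b₄)

/-- `L₂(x) = (x-f)·ȳ(x) - (x-g-v)·y(x+δ) + (x-g)·y(x)`. -/
def L2 (δ v f g : ℂ) (y ybar : ℂ → ℂ) (x : ℂ) : ℂ :=
  (x - f) * ybar x - (x - g - v) * y (x + δ) + (x - g) * y x

/-- `L₃(x) = w·(x-f̄-δ)·y(x) + A(x)·(x-g-δ)·ȳ(x) - B(x-δ)·(x-g-v)·ȳ(x-δ)`. -/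
def L3 (δ v f g fbar w a₁ a₂ a₃ a₄ b₁ b₂ b₃ b₄ : ℂ) (y ybar : ℂ → ℂ) (x : ℂ) : ℂ :=
  w * (x - fbar - δ) * y x + Apoly a₁ a₂ a₃ a₄ x * (x - g - δ) * ybar x
    - Bpoly b₁ b₂ b₃ b₄ (x - δ) * (x - g - v) * ybar (x - δ)

/-- the four Lax relations at `x = g, g+δ, g+v` yield the second
d-E₇⁽¹⁾ evolution equation. -/
theorem dE7_second_evolution_equation
    (δ a₁ a₂ a₃ a₄ b₁ b₂ b₃ b₄ : ℂ)
    (hcons : a₁ - a₂ - a₃ + a₄ + b₁ + b₂ - b₃ + b₄ + δ = 0)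
    (v : ℂ) (hv : v = a₁ + a₄ - b₃)
    (f g fbar w : ℂ) (y ybar : ℂ → ℂ)
    (hvv : v * (v - δ) ≠ 0)
    (hy1 : y (g + δ) ≠ 0) (hy2 : y (g + v) ≠ 0)
    (hL2g : L2 δ v f g y ybar g = 0)
    (hL3gd : L3 δ v f g fbar w a₁ a₂ a₃ a₄ b₁ b₂ b₃ b₄ y ybar (g + δ) = 0)
    (hL2gv : L2 δ v f g y ybar (g + v) = 0)
    (hL3gv : L3 δ v f g fbar w a₁ a₂ a₃ a₄ b₁ b₂ b₃ b₄ y ybar (g + v) = 0) :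
    (f - g - v) * (fbar - g - v + δ) * Bpoly b₁ b₂ b₃ b₄ g
      = (f - g) * (fbar - g) * Apoly a₁ a₂ a₃ a₄ (g + v) := by
  simp only [L2, L3] at hL2g hL3gd hL2gv hL3gv
  simp only [add_sub_cancel_right] at hL3gd
  have e1 : w * (fbar - g) * (f - g) * y (g + δ)
      = v * (v - δ) * Bpoly b₁ b₂ b₃ b₄ g * y (g + δ) := by
    linear_combination (-(f - g)) * hL3gd
      + (Bpoly b₁ b₂ b₃ b₄ g * (δ - v)) * hL2g
  have e2 : w * (fbar - g - v + δ) * (f - g - v) * y (g + v)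
      = v * (v - δ) * Apoly a₁ a₂ a₃ a₄ (g + v) * y (g + v) := by
    linear_combination (-(f - g - v)) * hL3gv
      - (Apoly a₁ a₂ a₃ a₄ (g + v) * (v - δ)) * hL2gv
  have e1' := mul_right_cancel₀ hy1 e1
  have e2' := mul_right_cancel₀ hy2 e2
  have := mul_left_cancel₀ hvv (a := v * (v - δ))
    (b := (f - g - v) * (fbar - g - v + δ) * Bpoly b₁ b₂ b₃ b₄ g)
    (c := (f - g) * (fbar - g) * Apoly a₁ a₂ a₃ a₄ (g + v))
  apply this
  linear_combination (-(f - g - v) * (fbar - g - v + δ)) * e1'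
    + (f - g) * (fbar - g) * e2'

end
end

section
/- Fix x ∈ ℂ with x ∉ {f, f+δ, g+v, g+δ}. If L₂(x) = 0, L₂(x-δ) = 0 and L₃(x) = 0, then L₁(x) = 0, where L₁(x) := A(x)/(x-f)·y(x+δ) + B(x-δ)/(x-f-δ)·y(x-δ) - (1/(x-g-v))·[ A(x)·(x-g)/(x-f) + V(x-δ)/((x-f-δ)(x-g-δ)) ]·y(x) and V(x) := B(x)·(x-g-v)·(x-g-v+δ) - w·(x-f)·(x-f̄). Moreover, substituting ȳ(x) = [(x-g-v)y(x+δ) - (x-g)y(x)]/(x-f) and ȳ(x-δ) = [(x-g-v-δ)y(x) - (x-g-δ)y(x-δ)]/(x-f-δ) into L₃(x) yields exactly (x-g-v)·(x-g-δ)·L₁(x). -/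
noncomputable section

/-- `V(x) = B(x)·(x-g-v)·(x-g-v+δ) - w·(x-f)·(x-f̄)`. -/
def Vpoly (δ v f g fbar w b₁ b₂ b₃ b₄ x : ℂ) : ℂ :=
  Bpoly b₁ b₂ b₃ b₄ x * (x - g - v) * (x - g - v + δ) - w * (x - f) * (x - fbar)

/-- The d-E₇⁽¹⁾ Lax operator
`L₁(x) = A(x)/(x-f)·y(x+δ) + B(x-δ)/(x-f-δ)·y(x-δ)
  - (1/(x-g-v))·[A(x)(x-g)/(x-f) + V(x-δ)/((x-f-δ)(x-g-δ))]·y(x)`. -/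
def L1 (δ v f g fbar w a₁ a₂ a₃ a₄ b₁ b₂ b₃ b₄ : ℂ) (y : ℂ → ℂ) (x : ℂ) : ℂ :=
  Apoly a₁ a₂ a₃ a₄ x / (x - f) * y (x + δ)
    + Bpoly b₁ b₂ b₃ b₄ (x - δ) / (x - f - δ) * y (x - δ)
    - (1 / (x - g - v)) * (Apoly a₁ a₂ a₃ a₄ x * (x - g) / (x - f)
        + Vpoly δ v f g fbar w b₁ b₂ b₃ b₄ (x - δ) / ((x - f - δ) * (x - g - δ))) * y x

set_option maxHeartbeats 4000000 in
lemma key_id (δ f g fbar w v x A B yp yx ym : ℂ)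
    (hf : x - f ≠ 0) (hfd : x - f - δ ≠ 0) (hgv : x - g - v ≠ 0) (hgd : x - g - δ ≠ 0) :
    w * (x - fbar - δ) * yx + A * (x - g - δ) * (((x - g - v) * yp - (x - g) * yx) / (x - f))
      - B * (x - g - v) * (((x - g - v - δ) * yx - (x - g - δ) * ym) / (x - f - δ))
    = (x - g - v) * (x - g - δ) * (A / (x - f) * yp + B / (x - f - δ) * ym
        - (1 / (x - g - v)) * (A * (x - g) / (x - f)
            + (B * (x - δ - g - v) * (x - δ - g - v + δ) - w * (x - δ - f) * (x - δ - fbar))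
                / ((x - f - δ) * (x - g - δ))) * yx) := by
  have e1 : ((x - g - v) * yp - (x - g) * yx) / (x - f) * (x - f)
      = (x - g - v) * yp - (x - g) * yx := div_mul_cancel₀ _ hf
  have e2 : ((x - g - v - δ) * yx - (x - g - δ) * ym) / (x - f - δ) * (x - f - δ)
      = (x - g - v - δ) * yx - (x - g - δ) * ym := div_mul_cancel₀ _ hfd
  have e3 : A / (x - f) * (x - f) = A := div_mul_cancel₀ _ hf
  have e4 : B / (x - f - δ) * (x - f - δ) = B := div_mul_cancel₀ _ hfd
  have e5 : 1 / (x - g - v) * (x - g - v) = 1 := one_div_mul_cancel hgv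
  have e6 : A * (x - g) / (x - f) * (x - f) = A * (x - g) := div_mul_cancel₀ _ hf
  have e7 : (B * (x - δ - g - v) * (x - δ - g - v + δ) - w * (x - δ - f) * (x - δ - fbar))
        / ((x - f - δ) * (x - g - δ)) * ((x - f - δ) * (x - g - δ))
      = B * (x - δ - g - v) * (x - δ - g - v + δ) - w * (x - δ - f) * (x - δ - fbar) :=
    div_mul_cancel₀ _ (mul_ne_zero hfd hgd)
  apply mul_right_cancel₀ (mul_ne_zero (mul_ne_zero (mul_ne_zero hf hfd) hgv) hgd)
  linear_combination
    (A * (x - g - δ) * (x - f - δ) * (x - g - v) * (x - g - δ)) * e1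
    - (B * (x - g - v) * (x - f) * (x - g - v) * (x - g - δ)) * e2
    - (yp * (x - f - δ) * (x - g - v) ^ 2 * (x - g - δ) ^ 2) * e3
    - (ym * (x - f) * (x - g - v) ^ 2 * (x - g - δ) ^ 2) * e4
    + (yx * (x - f) * (x - f - δ) * (x - g - v) * (x - g - δ) ^ 2
        * (A * (x - g) / (x - f)
            + (B * (x - δ - g - v) * (x - δ - g - v + δ) - w * (x - δ - f) * (x - δ - fbar))
                / ((x - f - δ) * (x - g - δ)))) * e5
    + (yx * (x - f - δ) * (x - g - v) * (x - g - δ) ^ 2) * e6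
    + (yx * (x - f) * (x - g - v) * (x - g - δ)) * e7

set_option maxHeartbeats 1000000 in
/-- eliminating `ȳ(x)`, `ȳ(x-δ)` from `L₂(x) = L₂(x-δ) = L₃(x) = 0`
yields `L₁(x) = 0`; moreover the substitution of `ȳ` from `L₂` into `L₃(x)` produces
exactly `(x-g-v)(x-g-δ)·L₁(x)`. -/
theorem dE7_L1_from_L2_L3
    (δ a₁ a₂ a₃ a₄ b₁ b₂ b₃ b₄ : ℂ)
    (hcons : a₁ - a₂ - a₃ + a₄ + b₁ + b₂ - b₃ + b₄ + δ = 0)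
    (v : ℂ) (hv : v = a₁ + a₄ - b₃)
    (f g fbar w : ℂ) (y ybar : ℂ → ℂ)
    (x : ℂ) (hx : x ∉ ({f, f + δ, g + v, g + δ} : Set ℂ))
    (hL2x : L2 δ v f g y ybar x = 0)
    (hL2xm : L2 δ v f g y ybar (x - δ) = 0)
    (hL3x : L3 δ v f g fbar w a₁ a₂ a₃ a₄ b₁ b₂ b₃ b₄ y ybar x = 0) :
    L1 δ v f g fbar w a₁ a₂ a₃ a₄ b₁ b₂ b₃ b₄ y x = 0
    ∧ w * (x - fbar - δ) * y x
        + Apoly a₁ a₂ a₃ a₄ x * (x - g - δ)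
            * (((x - g - v) * y (x + δ) - (x - g) * y x) / (x - f))
        - Bpoly b₁ b₂ b₃ b₄ (x - δ) * (x - g - v)
            * (((x - g - v - δ) * y x - (x - g - δ) * y (x - δ)) / (x - f - δ))
      = (x - g - v) * (x - g - δ) * L1 δ v f g fbar w a₁ a₂ a₃ a₄ b₁ b₂ b₃ b₄ y x := by

  simp only [Set.mem_insert_iff, Set.mem_singleton_iff, not_or] at hx
  obtain ⟨h1, h2, h3, h4⟩ := hx
  have hf : x - f ≠ 0 := sub_ne_zero.mpr h1
  have hfd : x - f - δ ≠ 0 := by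
    intro h; apply h2; linear_combination h
  have hgv : x - g - v ≠ 0 := by
    intro h; apply h3; linear_combination h
  have hgd : x - g - δ ≠ 0 := by
    intro h; apply h4; linear_combination h
  have hyb1 : ybar x = ((x - g - v) * y (x + δ) - (x - g) * y x) / (x - f) := by
    field_simp
    unfold L2 at hL2x
    linear_combination hL2x
  have hyb2 : ybar (x - δ) = ((x - g - v - δ) * y x - (x - g - δ) * y (x - δ)) / (x - f - δ) := by
    field_simp
    unfold L2 at hL2xm
    have : x - δ + δ = x := by ring
    rw [this] at hL2xm
    linear_combination hL2xm
  have key : w * (x - fbar - δ) * y x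
        + Apoly a₁ a₂ a₃ a₄ x * (x - g - δ)
            * (((x - g - v) * y (x + δ) - (x - g) * y x) / (x - f))
        - Bpoly b₁ b₂ b₃ b₄ (x - δ) * (x - g - v)
            * (((x - g - v - δ) * y x - (x - g - δ) * y (x - δ)) / (x - f - δ))
      = (x - g - v) * (x - g - δ) * L1 δ v f g fbar w a₁ a₂ a₃ a₄ b₁ b₂ b₃ b₄ y x := by
    exact key_id δ f g fbar w (v) x (Apoly a₁ a₂ a₃ a₄ x) (Bpoly b₁ b₂ b₃ b₄ (x - δ))
      (y (x + δ)) (y x) (y (x - δ)) hf hfd hgv hgd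
  refine ⟨?_, key⟩
  unfold L3 at hL3x
  rw [hyb1, hyb2] at hL3x
  rw [hL3x] at key
  have := key.symm
  rcases mul_eq_zero.mp this with h | h
  · rcases mul_eq_zero.mp h with h | h
    · exact absurd h hgv
    · exact absurd h hgd
  · exact h

end
end

section
/- Assume w·(f-g)·(f̄-g) = v·(v-δ)·B(g), w·(f-g-v)·(f̄-g-v+δ) = v·(v-δ)·A(g+v), and v ≠ δ. Then for all x ∈ ℂ the linear identity w·(x-f̄-δ)·(f-g)·(f-g-v) = v·[ (f-g-v)·(x-g-v)·B(g) - (f-g)·(x-g-δ)·A(g+v) ] holds. Consequently, if moreover f ≠ g and f ≠ g+v, then for every x ∉ {f, f+δ, g+v, g+δ} and all values y(x+δ), y(x), y(x-δ), the expression A(x)/(x-f)·y(x+δ) + B(x-δ)/(x-f-δ)·y(x-δ) - (1/(x-g-v))·[A(x)(x-g)/(x-f) + V(x-δ)/((x-f-δ)(x-g-δ))]·y(x) equals A(x)/(x-f)·[y(x+δ) - (x-g)/(x-g-v)·y(x)] + B(x-δ)/(x-f-δ)·[y(x-δ) - (x-g-v-δ)/(x-g-δ)·y(x)] + v·[ B(g)/((f-g)(x-g-δ))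 - A(g+v)/((f-g-v)(x-g-v)) ]·y(x), where V(x) := B(x)(x-g-v)(x-g-v+δ) - w(x-f)(x-f̄). -/
noncomputable section

set_option maxRecDepth 8000
set_option maxHeartbeats 1600000

/-- under the two `w`-relations (eq:w1), (eq:w2), a linear identity in `x`
holds, and consequently the Lax expression `L₁(x)` (eq:E7L1) can be rewritten in the
form (eq:E7LL1). -/
theorem dE7_L1_rewritten
    (δ a₁ a₂ a₃ a₄ b₁ b₂ b₃ b₄ : ℂ)
    (hcons : a₁ - a₂ - a₃ + a₄ + b₁ + b₂ - b₃ + b₄ + δ = 0)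
    (v : ℂ) (hv : v = a₁ + a₄ - b₃)
    (f g fbar w : ℂ)
    (hw1 : w * (f - g) * (fbar - g) = v * (v - δ) * Bpoly b₁ b₂ b₃ b₄ g)
    (hw2 : w * (f - g - v) * (fbar - g - v + δ) = v * (v - δ) * Apoly a₁ a₂ a₃ a₄ (g + v))
    (hvδ : v ≠ δ) :
    (∀ x : ℂ, w * (x - fbar - δ) * (f - g) * (f - g - v)
        = v * ((f - g - v) * (x - g - v) * Bpoly b₁ b₂ b₃ b₄ g
            - (f - g) * (x - g - δ) * Apoly a₁ a₂ a₃ a₄ (g + v)))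
    ∧ (f ≠ g → f ≠ g + v →
        ∀ x : ℂ, x ∉ ({f, f + δ, g + v, g + δ} : Set ℂ) →
        ∀ yp y0 ym : ℂ,
        Apoly a₁ a₂ a₃ a₄ x / (x - f) * yp
            + Bpoly b₁ b₂ b₃ b₄ (x - δ) / (x - f - δ) * ym
            - (1 / (x - g - v)) * (Apoly a₁ a₂ a₃ a₄ x * (x - g) / (x - f)
                + Vpoly δ v f g fbar w b₁ b₂ b₃ b₄ (x - δ) / ((x - f - δ) * (x - g - δ))) * y0
          = Apoly a₁ a₂ a₃ a₄ x / (x - f) * (yp - (x - g) / (x - g - v) * y0)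
            + Bpoly b₁ b₂ b₃ b₄ (x - δ) / (x - f - δ)
                * (ym - (x - g - v - δ) / (x - g - δ) * y0)
            + v * (Bpoly b₁ b₂ b₃ b₄ g / ((f - g) * (x - g - δ))
                - Apoly a₁ a₂ a₃ a₄ (g + v) / ((f - g - v) * (x - g - v))) * y0) := by

  have h1 : ∀ x : ℂ, w * (x - fbar - δ) * (f - g) * (f - g - v)
      = v * ((f - g - v) * (x - g - v) * Bpoly b₁ b₂ b₃ b₄ g
          - (f - g) * (x - g - δ) * Apoly a₁ a₂ a₃ a₄ (g + v)) := by
    intro x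
    have hvd : v - δ ≠ 0 := sub_ne_zero.mpr hvδ
    apply mul_left_cancel₀ hvd
    linear_combination (f - g - v) * (x - g - v) * hw1 - (f - g) * (x - g - δ) * hw2
  refine ⟨h1, ?_⟩
  intro hfg hfgv x hx yp y0 ym
  simp only [Set.mem_insert_iff, Set.mem_singleton_iff, not_or] at hx
  obtain ⟨hx1, hx2, hx3, hx4⟩ := hx
  have d1 : x - f ≠ 0 := sub_ne_zero.mpr hx1
  have d2 : x - f - δ ≠ 0 := by
    have := sub_ne_zero.mpr hx2
    intro h; apply this; linear_combination h
  have d3 : x - g - v ≠ 0 := by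
    have := sub_ne_zero.mpr hx3
    intro h; apply this; linear_combination h
  have d4 : x - g - δ ≠ 0 := by
    have := sub_ne_zero.mpr hx4
    intro h; apply this; linear_combination h
  have d5 : f - g ≠ 0 := sub_ne_zero.mpr hfg
  have d6 : f - g - v ≠ 0 := by
    have := sub_ne_zero.mpr hfgv
    intro h; apply this; linear_combination h
  have key2 : (1 / (x - g - v)) * (Vpoly δ v f g fbar w b₁ b₂ b₃ b₄ (x - δ)
        / ((x - f - δ) * (x - g - δ)))
      = Bpoly b₁ b₂ b₃ b₄ (x - δ) / (x - f - δ) * ((x - g - v - δ) / (x - g - δ))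
        - v * (Bpoly b₁ b₂ b₃ b₄ g / ((f - g) * (x - g - δ))
            - Apoly a₁ a₂ a₃ a₄ (g + v) / ((f - g - v) * (x - g - v))) := by
    have h1x := h1 x
    rw [Vpoly]
    rw [div_sub_div _ _ (mul_ne_zero d5 d4) (mul_ne_zero d6 d3), div_mul_div_comm,
      div_mul_div_comm, ← mul_div_assoc,
      div_sub_div _ _ (mul_ne_zero d2 d4) (mul_ne_zero (mul_ne_zero d5 d4) (mul_ne_zero d6 d3)),
      div_eq_div_iff (mul_ne_zero d3 (mul_ne_zero d2 d4))
        (mul_ne_zero (mul_ne_zero d2 d4) (mul_ne_zero (mul_ne_zero d5 d4) (mul_ne_zero d6 d3)))]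
    linear_combination (-((x - f - δ) * (x - f - δ) * (x - g - δ) * (x - g - δ) * (x - g - v))) * h1x
  linear_combination (-y0) * key2


end
end

section
/- Assume w·(f-g)·(f̄-g) = v·(v-δ)·B(g) and w·(f-g-v)·(f̄-g-v+δ) = v·(v-δ)·A(g+v). Then the polynomial N(X) := A(X)·(X-g)·(X-f-δ)·(X-g-δ) + V(X-δ)·(X-f) in ℂ[X], where V(X) = B(X)(X-g-v)(X-g-v+δ) - w(X-f)(X-f̄), vanishes at X = g+δ and at X = g+v. If moreover v ≠ δ, then N is divisible in ℂ[X] by (X-g-v)(X-g-δ) and the quotient is a polynomial of degree at most 5; equivalently, the coefficient of y(x) in (x-f)(x-f-δ)·L₁(x) is a polynomial of degree at most 5 in x (the coefficients of y(x+δ) and y(x-δ) being the degree-5 polynomials (x-f-δ)A(x) and (x-f)B(x-δ)). -/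
set_option maxRecDepth 8000
set_option maxHeartbeats 1600000

open Polynomial

/-- under the two `w`-relations, the numerator polynomial `N(X)` of the
`y(x)`-coefficient of `(x-f)(x-f-δ)L₁(x)` vanishes at `X = g+δ` and `X = g+v`, and (if
`v ≠ δ`) is divisible by `(X-g-v)(X-g-δ)` with quotient of degree at most `5`. -/
theorem dE7_L1_middle_coefficient_polynomial
    (δ a₁ a₂ a₃ a₄ b₁ b₂ b₃ b₄ : ℂ)
    (hcons : a₁ - a₂ - a₃ + a₄ + b₁ + b₂ - b₃ + b₄ + δ = 0)
    (v : ℂ) (hv : v = a₁ + a₄ - b₃)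
    (f g fbar w : ℂ)
    (hw1 : w * (f - g) * (fbar - g)
        = v * (v - δ) * ((g - b₁) * (g - b₂) * (g - b₃) * (g - b₄)))
    (hw2 : w * (f - g - v) * (fbar - g - v + δ)
        = v * (v - δ) * ((g + v - a₁) * (g + v - a₂) * (g + v - a₃) * (g + v - a₄)))
    (V : Polynomial ℂ → Polynomial ℂ)
    (hV : ∀ Y : Polynomial ℂ,
        V Y = (Y - C b₁) * (Y - C b₂) * (Y - C b₃) * (Y - C b₄)
            * (Y - C g - C v) * (Y - C g - C v + C δ)
            - C w * (Y - C f) * (Y - C fbar))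
    (N : Polynomial ℂ)
    (hN : N = (X - C a₁) * (X - C a₂) * (X - C a₃) * (X - C a₄)
            * (X - C g) * (X - C f - C δ) * (X - C g - C δ)
        + V (X - C δ) * (X - C f)) :
    N.eval (g + δ) = 0 ∧ N.eval (g + v) = 0
    ∧ (v ≠ δ → ∃ Q : Polynomial ℂ,
        N = (X - C g - C v) * (X - C g - C δ) * Q ∧ Q.degree ≤ 5) := by
  have h1 : N.eval (g + δ) = 0 := by
    rw [hN, hV]
    simp only [eval_add, eval_mul, eval_sub, eval_X, eval_C]
    linear_combination (f - g - δ) * hw1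
  have h2 : N.eval (g + v) = 0 := by
    rw [hN, hV]
    simp (config := { maxSteps := 2000000 }) only [eval_add, eval_mul, eval_sub, eval_X, eval_C]
    linear_combination (f + δ - g - v) * hw2
  refine ⟨h1, h2, fun hvd => ?_⟩
  have hdeg : N.degree ≤ 7 := by
    rw [hN, hV]; compute_degree
  obtain ⟨q, hq⟩ := (dvd_iff_isRoot (p := N)).mpr h2
  have hq2 : q.eval (g + δ) = 0 := by
    have h1' := h1
    rw [hq] at h1'
    simp only [eval_mul, eval_sub, eval_X, eval_C] at h1'
    rcases mul_eq_zero.mp h1' with h | h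
    · exfalso; apply hvd; linear_combination -(sub_eq_zero.mp h)
    · exact h
  obtain ⟨r, hr⟩ := dvd_iff_isRoot.mpr hq2
  refine ⟨r, ?_, ?_⟩
  · rw [hq, hr]; push_cast [C_add]; ring
  · rcases eq_or_ne r 0 with h0 | h0
    · simp [h0]
    · have hX1 : (X - C (g + v) : Polynomial ℂ) ≠ 0 := X_sub_C_ne_zero _
      have hX2 : (X - C (g + δ) : Polynomial ℂ) ≠ 0 := X_sub_C_ne_zero _
      have hNne : N ≠ 0 := by
        rw [hq, hr]
        exact mul_ne_zero hX1 (mul_ne_zero hX2 h0)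
      have hn7 : N.natDegree ≤ 7 := natDegree_le_of_degree_le hdeg
      have hnd : N.natDegree = 2 + r.natDegree := by
        rw [hq, hr, natDegree_mul hX1 (mul_ne_zero hX2 h0),
          natDegree_mul hX2 h0, natDegree_X_sub_C, natDegree_X_sub_C]
        ring
      have : r.natDegree ≤ 5 := by omega
      exact degree_le_of_natDegree_le this
end

section
/- Define the polynomial-cleared Lax expression M(x) := (f-g)(f-g-v)·(x-f-δ)(x-g-δ)·A(x)·[(x-g-v)·y(x+δ) - (x-g)·y(x)] + (f-g)(f-g-v)·(x-f)(x-g-v)·B(x-δ)·[(x-g-δ)·y(x-δ) - (x-g-v-δ)·y(x)] + v·(x-f)(x-f-δ)·[(f-g-v)(x-g-v)·B(g) - (f-g)(x-g-δ)·A(g+v)]·y(x), which equals (f-g)(f-g-v)(x-g-v)(x-g-δ)(x-f)(x-f-δ)·L₁(x) for the d-E₇⁽¹⁾ Lax operator L₁. If (f-g-v)·y(f+δ) = (f-g)·y(f), then M(f) = 0 and M(f+δ) = 0; that is, x = f and x = f+δ are apparent singularities of the equation L₁ = 0, both governed by the single condition y(f+δ)/y(f) = (f-g)/(f-g-v). 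-/
noncomputable section

/-- property (iii) of Lemma 2.3: `x = f` and `x = f+δ` are apparent
singularities of `L₁ = 0`, both governed by `y(f+δ)/y(f) = (f-g)/(f-g-v)`. -/
theorem dE7_L1_apparent_singularities
    (δ a₁ a₂ a₃ a₄ b₁ b₂ b₃ b₄ : ℂ)
    (hcons : a₁ - a₂ - a₃ + a₄ + b₁ + b₂ - b₃ + b₄ + δ = 0)
    (v : ℂ) (hv : v = a₁ + a₄ - b₃)
    (f g : ℂ) (y : ℂ → ℂ)
    (M : ℂ → ℂ)
    (hM : ∀ x, M x = (f - g) * (f - g - v) * (x - f - δ) * (x - g - δ)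
            * Apoly a₁ a₂ a₃ a₄ x * ((x - g - v) * y (x + δ) - (x - g) * y x)
        + (f - g) * (f - g - v) * (x - f) * (x - g - v) * Bpoly b₁ b₂ b₃ b₄ (x - δ)
            * ((x - g - δ) * y (x - δ) - (x - g - v - δ) * y x)
        + v * (x - f) * (x - f - δ)
            * ((f - g - v) * (x - g - v) * Bpoly b₁ b₂ b₃ b₄ g
                - (f - g) * (x - g - δ) * Apoly a₁ a₂ a₃ a₄ (g + v)) * y x)
    (hy : (f - g - v) * y (f + δ) = (f - g) * y f) :
    M f = 0 ∧ M (f + δ) = 0 := by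
  constructor
  · rw [hM f]
    simp only [Apoly, Bpoly]
    linear_combination ((f - g) * (f - g - v) * (f - f - δ) * (f - g - δ)
      * ((f - a₁) * (f - a₂) * (f - a₃) * (f - a₄))) * hy
  · rw [hM (f + δ)]
    have h1 : f + δ - δ = f := by ring
    rw [h1]
    simp only [Apoly, Bpoly]
    linear_combination (-((f - g) * (f - g - v) * (f + δ - f) * (f + δ - g - v)
      * ((f + δ - δ - b₁) * (f + δ - δ - b₂) * (f + δ - δ - b₃) * (f + δ - δ - b₄)))) * hy

end
end

section
/- Assume w ≠ 0 and fix x ∈ ℂ with x ∉ {f̄, f̄+δ, g, g+v}. If L₂(x) = 0, L₃(x) = 0 and L₃(x+δ) = 0, then L₁*(x) = 0, where L₁*(x) := A(x+δ)/(x-f̄)·ȳ(x+δ) + B(x-δ)/(x-f̄-δ)·ȳ(x-δ) - (1/(x-g-v))·[ A(x)·(x-g-δ)/(x-f̄-δ) + V(x)/((x-f̄)(x-g)) ]·ȳ(x) and V(x) := B(x)(x-g-v)(x-g-v+δ) - w(x-f)(x-f̄). (Here A(x+δ) = Ā(x) and B = B̄ are the polynomials for the T-shifted parameters āᵢ = aᵢ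 - δ, b̄ᵢ = bᵢ.) -/
noncomputable section

/-- The shifted d-E₇⁽¹⁾ Lax operator
`L₁*(x) = A(x+δ)/(x-f̄)·ȳ(x+δ) + B(x-δ)/(x-f̄-δ)·ȳ(x-δ)
  - (1/(x-g-v))·[A(x)(x-g-δ)/(x-f̄-δ) + V(x)/((x-f̄)(x-g))]·ȳ(x)`. -/
def L1star (δ v f g fbar w a₁ a₂ a₃ a₄ b₁ b₂ b₃ b₄ : ℂ) (ybar : ℂ → ℂ) (x : ℂ) : ℂ :=
  Apoly a₁ a₂ a₃ a₄ (x + δ) / (x - fbar) * ybar (x + δ)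
    + Bpoly b₁ b₂ b₃ b₄ (x - δ) / (x - fbar - δ) * ybar (x - δ)
    - (1 / (x - g - v)) * (Apoly a₁ a₂ a₃ a₄ x * (x - g - δ) / (x - fbar - δ)
        + Vpoly δ v f g fbar w b₁ b₂ b₃ b₄ x / ((x - fbar) * (x - g))) * ybar x

set_option maxHeartbeats 2000000 in
set_option maxRecDepth 8000 in
/-- eliminating `y(x)`, `y(x+δ)` from `L₂(x) = L₃(x) = L₃(x+δ) = 0`
yields `L₁*(x) = 0`. -/
theorem dE7_L1star_from_L2_L3
    (δ a₁ a₂ a₃ a₄ b₁ b₂ b₃ b₄ : ℂ)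
    (hcons : a₁ - a₂ - a₃ + a₄ + b₁ + b₂ - b₃ + b₄ + δ = 0)
    (v : ℂ) (hv : v = a₁ + a₄ - b₃)
    (f g fbar w : ℂ) (y ybar : ℂ → ℂ)
    (hw : w ≠ 0)
    (x : ℂ) (hx : x ∉ ({fbar, fbar + δ, g, g + v} : Set ℂ))
    (hL2x : L2 δ v f g y ybar x = 0)
    (hL3x : L3 δ v f g fbar w a₁ a₂ a₃ a₄ b₁ b₂ b₃ b₄ y ybar x = 0)
    (hL3xd : L3 δ v f g fbar w a₁ a₂ a₃ a₄ b₁ b₂ b₃ b₄ y ybar (x + δ) = 0) :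
    L1star δ v f g fbar w a₁ a₂ a₃ a₄ b₁ b₂ b₃ b₄ ybar x = 0 := by
  simp only [Set.mem_insert_iff, Set.mem_singleton_iff, not_or] at hx
  obtain ⟨h1, h2, h3, h4⟩ := hx
  have e1 : x - fbar ≠ 0 := sub_ne_zero.mpr h1
  have e2 : x - fbar - δ ≠ 0 := fun h => h2 (by linear_combination h)
  have e3 : x - g ≠ 0 := sub_ne_zero.mpr h3
  have e4 : x - g - v ≠ 0 := fun h => h4 (by linear_combination h)
  simp only [L1star, L2, L3, Vpoly] at hL2x hL3x hL3xd ⊢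
  rw [show x + δ - δ = x from by ring, show x + δ - fbar - δ = x - fbar from by ring] at hL3xd
  set Ax := Apoly a₁ a₂ a₃ a₄ x with hAx
  set A1 := Apoly a₁ a₂ a₃ a₄ (x + δ) with hA1
  set Bm := Bpoly b₁ b₂ b₃ b₄ (x - δ) with hBm
  set B0 := Bpoly b₁ b₂ b₃ b₄ x with hB0
  clear_value Ax A1 Bm B0
  set_option maxHeartbeats 2000000 in
  field_simp
  set_option maxHeartbeats 4000000 in
  set_option maxRecDepth 16000 in
  linear_combination (w * (x - fbar) * (x - fbar - δ)) * hL2x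
    + ((x - fbar - δ) * (x - g - v)) * hL3xd
    - ((x - g) * (x - fbar)) * hL3x

end
end

section
/- Define M*(x) := (x-f̄-δ)(x-g-v)(x-g)·A(x+δ)·ȳ(x+δ) + (x-f̄)(x-g-v)(x-g)·B(x-δ)·ȳ(x-δ) - [ (x-f̄)(x-g)(x-g-δ)·A(x) + (x-f̄-δ)·V(x) ]·ȳ(x), where V(x) = B(x)(x-g-v)(x-g-v+δ) - w(x-f)(x-f̄); this equals (x-f̄)(x-f̄-δ)(x-g-v)(x-g)·L₁*(x) for the shifted d-E₇⁽¹⁾ Lax operator L₁*. If A(f̄+δ)·(f̄-g)·ȳ(f̄+δ) = B(f̄)·(f̄-g-v+δ)·ȳ(f̄), then M*(f̄) = 0 and M*(f̄+δ) = 0; that is, x = f̄ and x = f̄+δ are apparent singularities of L₁* = 0, both governed by the single condition ȳ(f̄+δ)/ȳ(f̄) = B(f̄)(f̄-g-v+δ)/(A(f̄+δ)(f̄-g)). -/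
noncomputable section

/-- property (iii) of Lemma 2.4: `x = f̄` and `x = f̄+δ` are apparent
singularities of `L₁* = 0`, both governed by
`ȳ(f̄+δ)/ȳ(f̄) = B(f̄)(f̄-g-v+δ)/(A(f̄+δ)(f̄-g))`. -/
theorem dE7_L1star_apparent_singularities
    (δ a₁ a₂ a₃ a₄ b₁ b₂ b₃ b₄ : ℂ)
    (hcons : a₁ - a₂ - a₃ + a₄ + b₁ + b₂ - b₃ + b₄ + δ = 0)
    (v : ℂ) (hv : v = a₁ + a₄ - b₃)
    (f g fbar w : ℂ) (ybar : ℂ → ℂ)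
    (Mstar : ℂ → ℂ)
    (hM : ∀ x, Mstar x = (x - fbar - δ) * (x - g - v) * (x - g)
            * Apoly a₁ a₂ a₃ a₄ (x + δ) * ybar (x + δ)
        + (x - fbar) * (x - g - v) * (x - g) * Bpoly b₁ b₂ b₃ b₄ (x - δ) * ybar (x - δ)
        - ((x - fbar) * (x - g) * (x - g - δ) * Apoly a₁ a₂ a₃ a₄ x
            + (x - fbar - δ) * Vpoly δ v f g fbar w b₁ b₂ b₃ b₄ x) * ybar x)
    (hy : Apoly a₁ a₂ a₃ a₄ (fbar + δ) * (fbar - g) * ybar (fbar + δ)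
        = Bpoly b₁ b₂ b₃ b₄ fbar * (fbar - g - v + δ) * ybar fbar) :
    Mstar fbar = 0 ∧ Mstar (fbar + δ) = 0 := by
  constructor
  · rw [hM]
    simp only [Vpoly]
    linear_combination (-δ) * (fbar - g - v) * hy
  · rw [hM]
    simp only [Vpoly]
    have h : fbar + δ - δ = fbar := by ring
    rw [h]
    linear_combination (-δ) * (fbar + δ - g) * hy

end
end

section
/- Assume w·(f-g)·(f̄-g) = v·(v-δ)·B(g) and w·(f-g-v)·(f̄-g-v+δ) = v·(v-δ)·A(g+v). Then the polynomial N*(X) := (X-f̄)·(X-g)·(X-g-δ)·A(X) + (X-f̄-δ)·V(X) in ℂ[X], where V(X) = B(X)(X-g-v)(X-g-v+δ) - w(X-f)(X-f̄), vanishes at X = g and at X = g+v. If moreover v ≠ 0, then N* is divisible in ℂ[X] by (X-g)(X-g-v) and the quotient is a polynomial of degree at most 5; equivalently, the coefficient of ȳ(x) in (x-f̄)(x-f̄-δ)·L₁*(x) is a polynomial of degree at most 5 in x (the coefficients of ȳ(x+δ) and ȳ(x-δ) being (x-f̄-δ)A(x+δ) and (x-f̄)B(x-δ)). -/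
set_option maxRecDepth 4000

open Polynomial

/-- under the two `w`-relations, the numerator polynomial `N*(X)` of the
`ȳ(x)`-coefficient of `(x-f̄)(x-f̄-δ)L₁*(x)` vanishes at `X = g` and `X = g+v`, and (if
`v ≠ 0`) is divisible by `(X-g)(X-g-v)` with quotient of degree at most `5`. -/
theorem dE7_L1star_middle_coefficient_polynomial
    (δ a₁ a₂ a₃ a₄ b₁ b₂ b₃ b₄ : ℂ)
    (hcons : a₁ - a₂ - a₃ + a₄ + b₁ + b₂ - b₃ + b₄ + δ = 0)
    (v : ℂ) (hv : v = a₁ + a₄ - b₃)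
    (f g fbar w : ℂ)
    (hw1 : w * (f - g) * (fbar - g)
        = v * (v - δ) * ((g - b₁) * (g - b₂) * (g - b₃) * (g - b₄)))
    (hw2 : w * (f - g - v) * (fbar - g - v + δ)
        = v * (v - δ) * ((g + v - a₁) * (g + v - a₂) * (g + v - a₃) * (g + v - a₄)))
    (V : Polynomial ℂ)
    (hV : V = (X - C b₁) * (X - C b₂) * (X - C b₃) * (X - C b₄)
            * (X - C g - C v) * (X - C g - C v + C δ)
        - C w * (X - C f) * (X - C fbar))
    (Nstar : Polynomial ℂ)
    (hN : Nstar = (X - C fbar) * (X - C g) * (X - C g - C δ)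
            * ((X - C a₁) * (X - C a₂) * (X - C a₃) * (X - C a₄))
        + (X - C fbar - C δ) * V) :
    Nstar.eval g = 0 ∧ Nstar.eval (g + v) = 0
    ∧ (v ≠ 0 → ∃ Q : Polynomial ℂ,
        Nstar = (X - C g) * (X - C g - C v) * Q ∧ Q.degree ≤ 5) := by
  have hdeg : Nstar.natDegree ≤ 7 := by
    subst hV hN; compute_degree
  have h1 : Nstar.eval g = 0 := by
    subst hV hN
    simp only [eval_add, eval_mul, eval_sub, eval_X, eval_C]
    linear_combination (fbar + δ - g) * hw1
  have h2 : Nstar.eval (g + v) = 0 := by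
    subst hV hN
    simp only [eval_add, eval_mul, eval_sub, eval_X, eval_C]
    linear_combination (fbar - g - v) * hw2
  refine ⟨h1, h2, fun hvne => ?_⟩
  obtain ⟨Q1, hQ1⟩ := (dvd_iff_isRoot (p := Nstar) (a := g)).mpr h1
  have h2' : Q1.eval (g + v) = 0 := by
    have := h2
    rw [hQ1] at this
    simpa [hvne] using this
  obtain ⟨Q, hQ⟩ := (dvd_iff_isRoot (p := Q1) (a := g + v)).mpr h2'
  have hfact : Nstar = (X - C g) * (X - C g - C v) * Q := by
    rw [hQ1, hQ]; ring_nf; rw [C_add]; ring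
  refine ⟨Q, hfact, ?_⟩
  by_cases hQ0 : Q = 0
  · simp [hQ0]
  · have e : (X - C g - C v : Polynomial ℂ) = X - C (g + v) := by
      rw [C_add]; ring
    have hm : ((X - C g) * (X - C g - C v)).Monic := by
      rw [e]; exact (monic_X_sub_C g).mul (monic_X_sub_C (g + v))
    have hnd2 : ((X - C g) * (X - C g - C v)).natDegree = 2 := by
      rw [e]; compute_degree!
    have hNd : Nstar.natDegree = 2 + Q.natDegree := by
      rw [hfact, natDegree_mul hm.ne_zero hQ0, hnd2]
    have hQnd : Q.natDegree ≤ 5 := by omega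
    calc Q.degree ≤ (Q.natDegree : WithBot ℕ) := degree_le_natDegree
      _ ≤ 5 := by exact_mod_cast hQnd
end

section
/- Assume w ≠ 0 and let f̄ ∈ ℂ. Suppose y : ℂ → ℂ satisfies L₁(x) = 0 for all x ∉ {f, f+δ, g+v, g+δ}, where L₁(x) := A(x)/(x-f)·y(x+δ) + B(x-δ)/(x-f-δ)·y(x-δ) - (1/(x-g-v))·[A(x)(x-g)/(x-f) + V(x-δ)/((x-f-δ)(x-g-δ))]·y(x) and V(x) := B(x)(x-g-v)(x-g-v+δ) - w(x-f)(x-f̄). Define ȳ(x) := [(x-g-v)·y(x+δ) - (x-g)·y(x)]/(x-f) for x ≠ f. Then ȳ satisfies the T-shifted Lax equation L₁*(x) = 0 for every x ∉ {f-δ, f, f+δ, g, g+δ, g+v-δ, g+v, f̄, f̄+δ}, where L₁*(x) := A(x+δ)/(x-f̄)·ȳ(x+δ) + B(x-δ)/(x-f̄-δ)·ȳ(x-δ) - (1/(x-g-v))·[A(x)(x-g-δ)/(x-f̄-δ) + V(x)/((x-f̄)(x-g))]·ȳ(x). -/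
noncomputable section

set_option maxHeartbeats 2000000 in
lemma aux1' (x δ f g v fbar AP A0 V0 : ℂ)
    (hW : x - g - v ≠ 0) (hWp : x + δ - g - v ≠ 0) :
    AP / (x - fbar) * (-(x + δ - g) / (x + δ - f))
      - 1 / (x - g - v) * (A0 * (x - g - δ) / (x - fbar - δ) + V0 / ((x - fbar) * (x - g)))
        * ((x - g - v) / (x - f))
    = (x + δ - g - v) / (x - fbar)
        * (-(1 / (x + δ - g - v)) * (AP * (x + δ - g) / (x + δ - f) + V0 / ((x - f) * (x - g))))
      - (x - g - δ) / (x - fbar - δ) * (A0 / (x - f)) := by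
  simp only [← div_div]
  have cW : (x - g - v) * (x - g - v)⁻¹ = 1 := mul_inv_cancel₀ hW
  have cWp : (x + δ - g - v) * (x + δ - g - v)⁻¹ = 1 := mul_inv_cancel₀ hWp
  linear_combination
    (-(A0 * (x - g - δ) / (x - fbar - δ) + V0 / (x - fbar) / (x - g)) / (x - f)) * cW
    + ((AP * (x + δ - g) / (x + δ - f) + V0 / (x - f) / (x - g)) / (x - fbar)) * cWp

set_option maxHeartbeats 2000000 in
lemma aux0' (x δ f g v fbar w B0 Bm A0 : ℂ)
    (hΦ : x - fbar ≠ 0) (hΦm : x - fbar - δ ≠ 0) (hFm : x - f - δ ≠ 0)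
    (hF : x - f ≠ 0) (hW : x - g - v ≠ 0) (hG : x - g ≠ 0) (hGd : x - g - δ ≠ 0) :
    Bm / (x - fbar - δ) * ((x - δ - g - v) / (x - f - δ))
      + 1 / (x - g - v) * (A0 * (x - g - δ) / (x - fbar - δ)
          + (B0 * (x - g - v) * (x - g - v + δ) - w * (x - f) * (x - fbar)) / ((x - fbar) * (x - g)))
        * ((x - g) / (x - f))
    = (x + δ - g - v) / (x - fbar) * (B0 / (x - f))
      + (x - g - δ) / (x - fbar - δ)
        * (1 / (x - g - v) * (A0 * (x - g) / (x - f)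
            + (Bm * (x - δ - g - v) * (x - δ - g - v + δ) - w * (x - δ - f) * (x - δ - fbar))
              / ((x - f - δ) * (x - g - δ)))) := by
  simp only [← div_div]
  have cW : (x - g - v) * (x - g - v)⁻¹ = 1 := mul_inv_cancel₀ hW
  have cG : (x - g) * (x - g)⁻¹ = 1 := mul_inv_cancel₀ hG
  have cF : (x - f) * (x - f)⁻¹ = 1 := mul_inv_cancel₀ hF
  have cPhi : (x - fbar) * (x - fbar)⁻¹ = 1 := mul_inv_cancel₀ hΦ
  have cGd : (x - g - δ) * (x - g - δ)⁻¹ = 1 := mul_inv_cancel₀ hGd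
  have cFm : (x - f - δ) * (x - f - δ)⁻¹ = 1 := mul_inv_cancel₀ hFm
  have cPhm : (x - fbar - δ) * (x - fbar - δ)⁻¹ = 1 := mul_inv_cancel₀ hΦm
  linear_combination
    (B0 * (x - g - v + δ) / (x - fbar) / (x - f) * ((x - g) / (x - g))
      - Bm * (x - δ - g - v) / (x - fbar - δ) / (x - f - δ) * ((x - g - δ) / (x - g - δ))) * cW
    + (B0 * (x - g - v + δ) / (x - fbar) / (x - f) - w / (x - g - v)) * cG
    + (-(w / (x - g - v)) * ((x - fbar) / (x - fbar)) * ((x - g) / (x - g))) * cF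
    + (-(w / (x - g - v)) * ((x - g) / (x - g))) * cPhi
    + (w / (x - g - v) - Bm * (x - δ - g - v) / (x - fbar - δ) / (x - f - δ)) * cGd
    + (w / (x - g - v) * ((x - fbar - δ) / (x - fbar - δ)) * ((x - g - δ) / (x - g - δ))) * cFm
    + (w / (x - g - v) * ((x - g - δ) / (x - g - δ))) * cPhm

set_option maxHeartbeats 4000000 in
set_option maxRecDepth 8000 in
/-- if `y` solves `L₁ = 0` away from the singular points, then
`ȳ(x) := [(x-g-v)y(x+δ) - (x-g)y(x)]/(x-f)` solves the T-shifted Lax equation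
`L₁* = 0` away from finitely many points. -/
theorem dE7_ybar_solves_L1star
    (δ a₁ a₂ a₃ a₄ b₁ b₂ b₃ b₄ : ℂ)
    (hcons : a₁ - a₂ - a₃ + a₄ + b₁ + b₂ - b₃ + b₄ + δ = 0)
    (v : ℂ) (hv : v = a₁ + a₄ - b₃)
    (f g w : ℂ) (hw : w ≠ 0) (fbar : ℂ)
    (y : ℂ → ℂ)
    (hL1 : ∀ x : ℂ, x ∉ ({f, f + δ, g + v, g + δ} : Set ℂ) →
        L1 δ v f g fbar w a₁ a₂ a₃ a₄ b₁ b₂ b₃ b₄ y x = 0)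
    (ybar : ℂ → ℂ)
    (hybar : ∀ x : ℂ, x ≠ f →
        ybar x = ((x - g - v) * y (x + δ) - (x - g) * y x) / (x - f)) :
    ∀ x : ℂ, x ∉ ({f - δ, f, f + δ, g, g + δ, g + v - δ, g + v, fbar, fbar + δ} : Set ℂ) →
      L1star δ v f g fbar w a₁ a₂ a₃ a₄ b₁ b₂ b₃ b₄ ybar x = 0 := by
  intro x hx
  simp only [Set.mem_insert_iff, Set.mem_singleton_iff, not_or] at hx
  obtain ⟨hx1, hx2, hx3, hx4, hx5, hx6, hx7, hx8, hx9⟩ := hx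
  have d1 : x - fbar ≠ 0 := sub_ne_zero.mpr hx8
  have d2 : x - fbar - δ ≠ 0 := by intro h; apply hx9; linear_combination h
  have d3 : x + δ - f ≠ 0 := by intro h; apply hx1; linear_combination h
  have d4 : x - f ≠ 0 := sub_ne_zero.mpr hx2
  have d5 : x - f - δ ≠ 0 := by intro h; apply hx3; linear_combination h
  have d6 : x - g ≠ 0 := sub_ne_zero.mpr hx4
  have d7 : x - g - δ ≠ 0 := by intro h; apply hx5; linear_combination h
  have d8 : x - g - v ≠ 0 := by intro h; apply hx7; linear_combination h
  have d9 : x + δ - g - v ≠ 0 := by intro h; apply hx6; linear_combination h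
  have h1 : L1 δ v f g fbar w a₁ a₂ a₃ a₄ b₁ b₂ b₃ b₄ y (x + δ) = 0 := by
    apply hL1
    simp only [Set.mem_insert_iff, Set.mem_singleton_iff, not_or]
    refine ⟨fun h => d3 ?_, fun h => d4 ?_, fun h => d9 ?_, fun h => d6 ?_⟩ <;>
      linear_combination h
  have h2 : L1 δ v f g fbar w a₁ a₂ a₃ a₄ b₁ b₂ b₃ b₄ y x = 0 := by
    apply hL1
    simp only [Set.mem_insert_iff, Set.mem_singleton_iff, not_or]
    refine ⟨fun h => d4 ?_, fun h => d5 ?_, fun h => d8 ?_, fun h => d7 ?_⟩ <;>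
      linear_combination h
  have key : L1star δ v f g fbar w a₁ a₂ a₃ a₄ b₁ b₂ b₃ b₄ ybar x
      = ((x + δ - g - v) / (x - fbar))
          * L1 δ v f g fbar w a₁ a₂ a₃ a₄ b₁ b₂ b₃ b₄ y (x + δ)
        - ((x - g - δ) / (x - fbar - δ))
          * L1 δ v f g fbar w a₁ a₂ a₃ a₄ b₁ b₂ b₃ b₄ y x := by
    have hyp1 : ybar (x + δ) = ((x + δ - g - v) * y (x + δ + δ) - (x + δ - g) * y (x + δ)) / (x + δ - f) := by
      rw [hybar (x + δ) (fun h => d3 (by linear_combination h))]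
    have hyp2 : ybar (x - δ) = ((x - δ - g - v) * y x - (x - δ - g) * y (x - δ)) / (x - δ - f) := by
      rw [hybar (x - δ) (fun h => d5 (by linear_combination h))]
      rw [show x - δ + δ = x from by ring]
    have hyp0 : ybar x = ((x - g - v) * y (x + δ) - (x - g) * y x) / (x - f) := by
      rw [hybar x hx2]
    simp only [L1star, L1, hyp1, hyp2, hyp0, Vpoly,
      show x + δ - δ = x from by ring, show x + δ - f - δ = x - f from by ring,
      show x + δ - g - δ = x - g from by ring, show x - δ - f = x - f - δ from by ring]
    linear_combination
      y (x + δ) * aux1' x δ f g v fbar (Apoly a₁ a₂ a₃ a₄ (x + δ)) (Apoly a₁ a₂ a₃ a₄ x)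
        (Bpoly b₁ b₂ b₃ b₄ x * (x - g - v) * (x - g - v + δ) - w * (x - f) * (x - fbar)) d8 d9
      + y x * aux0' x δ f g v fbar w (Bpoly b₁ b₂ b₃ b₄ x) (Bpoly b₁ b₂ b₃ b₄ (x - δ))
          (Apoly a₁ a₂ a₃ a₄ x) d1 d2 d5 d4 d8 d6 d7
  rw [key, h1, h2]
  ring

end
end

section
/- Define the polynomial-cleared d-E₆⁽¹⁾ Lax expression M(x) := (f-g)·(x-f-δ)(x-g-δ)·(x-a₁)(x-a₂)·[y(x+δ) - (x-g)·y(x)] + (f-g)·(x-f)·B(x)·[(x-g-δ)·y(x-δ) - y(x)] + (x-f)(x-f-δ)·[(f-g)(x-g-δ)·(g+u₁)(g+u₂) - B(x)]·y(x), which equals (f-g)(x-f)(x-f-δ)(x-g-δ)·L₁(x) for the d-E₆⁽¹⁾ Lax operator L₁. If y(f+δ) = (f-g)·y(f), then M(f) = 0 and M(f+δ) = 0; that is, x = f and x = f+δ are apparent singularities of L₁ = 0, both governed by the single condition y(f+δ) = (f-g)y(f). -/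
/-- for the d-E₆⁽¹⁾ Lax equation, `x = f` and `x = f+δ` are apparent
singularities, both governed by the single condition `y(f+δ) = (f-g)y(f)`. -/
theorem dE6_L1_apparent_singularities
    (δ a₁ a₂ b₁ b₂ b₃ b₄ : ℂ)
    (B : ℂ → ℂ)
    (hB : ∀ x, B x = (x - b₁) * (x - b₂) * (x - b₃) * (x - b₄))
    (u₁ u₂ : ℂ) (hu₁ : u₁ = a₂ - b₁ - b₂ - b₄ - δ) (hu₂ : u₂ = a₁ - b₃)
    (f g : ℂ) (y : ℂ → ℂ)
    (M : ℂ → ℂ)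
    (hM : ∀ x, M x = (f - g) * (x - f - δ) * (x - g - δ) * ((x - a₁) * (x - a₂))
            * (y (x + δ) - (x - g) * y x)
        + (f - g) * (x - f) * B x * ((x - g - δ) * y (x - δ) - y x)
        + (x - f) * (x - f - δ)
            * ((f - g) * (x - g - δ) * ((g + u₁) * (g + u₂)) - B x) * y x)
    (hy : y (f + δ) = (f - g) * y f) :
    M f = 0 ∧ M (f + δ) = 0 := by
  constructor
  · rw [hM]; simp [hy]
  · rw [hM, show f + δ - δ = f by ring, hy]; ring
end

section
/- Define the polynomial-cleared d-D₄⁽¹⁾ Lax expression M(x) := t·(x-f-δ)·(x-a₁)(x-a₂)·[g·y(x+δ) - y(x)] + g·(x-f)·(x-b₁-δ)(x-b₂-δ)·[y(x-δ) - g·y(x)] + (x-f)(x-f-δ)·[a₁·g·(g-t) + (g-1)(g-t)·(x+f-a₁-a₂) + u·g·(g-1)]·y(x), which equals g·(x-f)(x-f-δ)·L₁(x) for the d-D₄⁽¹⁾ Lax operator L₁. If g·y(f+δ) = y(f), then M(f) = 0 and M(f+δ) = 0; that is, x = f and x = f+δ are apparent singularities of L₁ = 0, both governed by the single condition g·y(f+δ)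 = y(f). -/
/-- for the d-D₄⁽¹⁾ Lax equation, `x = f` and `x = f+δ` are apparent
singularities, both governed by the single condition `g·y(f+δ) = y(f)`. -/
theorem dD4_L1_apparent_singularities
    (δ a₁ a₂ b₁ b₂ t : ℂ)
    (u : ℂ) (hu : u = a₂ - b₁ - b₂ - δ)
    (f g : ℂ) (hg : g ≠ 0) (y : ℂ → ℂ)
    (M : ℂ → ℂ)
    (hM : ∀ x, M x = t * (x - f - δ) * ((x - a₁) * (x - a₂)) * (g * y (x + δ) - y x)
        + g * (x - f) * ((x - b₁ - δ) * (x - b₂ - δ)) * (y (x - δ) - g * y x)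
        + (x - f) * (x - f - δ)
            * (a₁ * g * (g - t) + (g - 1) * (g - t) * (x + f - a₁ - a₂)
                + u * g * (g - 1)) * y x)
    (hy : g * y (f + δ) = y f) :
    M f = 0 ∧ M (f + δ) = 0 := by
  constructor
  · rw [hM, hy]
    ring
  · rw [hM]
    have h1 : f + δ - δ = f := by ring
    rw [h1, ← hy]
    ring
end

section
/- For ε ≠ 0 put a₄(ε) = -1/ε, a₃(ε) = -1/ε + a₁ - a₂ + b₁ + b₂ - b₃ + b₄ + δ, v(ε) = a₁ + a₄(ε) - b₃, and A_ε(x) = (x-a₁)(x-a₂)(x-a₃(ε))(x-a₄(ε)) (these substituted parameters satisfy the d-E₇⁽¹⁾ constraint for every ε ≠ 0). Then lim_{ε→0} ε²·[ (f-g-v(ε))·(f-ǧ-v(ε)-δ)·B(f) - (f-g)(f-ǧ)·A_ε(f) ] = B(f) - (f-g)(f-ǧ)(f-a₁)(f-a₂). In particular, if along some sequence εₙ → 0 with εₙ ≠ 0 the first d-E₇⁽¹⁾ equation (f-g-v(εₙ))(f-ǧ-v(εₙ)-δ)·B(f) = (f-g)(f-ǧ)·A_{εₙ}(f) holds, then the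 first d-E₆⁽¹⁾ equation (f-g)(f-ǧ)·(f-a₁)(f-a₂) = B(f) holds. -/
open Filter Topology

/-- degeneration of the first d-E₇⁽¹⁾ evolution equation to the first
d-E₆⁽¹⁾ evolution equation in the limit `ε → 0`. -/
theorem dE7_to_dE6_first_equation
    (δ a₁ a₂ b₁ b₂ b₃ b₄ : ℂ) (f g gcheck : ℂ)
    (B : ℂ → ℂ)
    (hB : ∀ x, B x = (x - b₁) * (x - b₂) * (x - b₃) * (x - b₄))
    (a₃ε a₄ε vε : ℂ → ℂ) (Aε : ℂ → ℂ → ℂ)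
    (ha₄ : ∀ ε : ℂ, ε ≠ 0 → a₄ε ε = -1 / ε)
    (ha₃ : ∀ ε : ℂ, ε ≠ 0 → a₃ε ε = -1 / ε + a₁ - a₂ + b₁ + b₂ - b₃ + b₄ + δ)
    (hvε : ∀ ε : ℂ, ε ≠ 0 → vε ε = a₁ + a₄ε ε - b₃)
    (hAε : ∀ (ε : ℂ), ε ≠ 0 → ∀ x : ℂ,
        Aε ε x = (x - a₁) * (x - a₂) * (x - a₃ε ε) * (x - a₄ε ε)) :
    (∀ ε : ℂ, ε ≠ 0 → a₁ - a₂ - a₃ε ε + a₄ε ε + b₁ + b₂ - b₃ + b₄ + δ = 0)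
    ∧ Tendsto
        (fun ε : ℂ => ε ^ 2 * ((f - g - vε ε) * (f - gcheck - vε ε - δ) * B f
            - (f - g) * (f - gcheck) * Aε ε f))
        (𝓝[≠] (0 : ℂ))
        (𝓝 (B f - (f - g) * (f - gcheck) * (f - a₁) * (f - a₂)))
    ∧ (∀ εseq : ℕ → ℂ, Tendsto εseq atTop (𝓝 (0 : ℂ)) → (∀ n, εseq n ≠ 0) →
        (∀ n, (f - g - vε (εseq n)) * (f - gcheck - vε (εseq n) - δ) * B f
            = (f - g) * (f - gcheck) * Aε (εseq n) f) →
        (f - g) * (f - gcheck) * ((f - a₁) * (f - a₂)) = B f) := by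
  -- the polynomial expression
  set c : ℂ := a₁ - a₂ + b₁ + b₂ - b₃ + b₄ + δ with hc
  set F : ℂ → ℂ := fun ε =>
      (ε * (f - g - a₁ + b₃) + 1) * (ε * (f - gcheck - a₁ + b₃ - δ) + 1) * B f
      - (f - g) * (f - gcheck) * (f - a₁) * (f - a₂) * ((ε * (f - c) + 1) * (ε * f + 1))
      with hF
  have hEq : ∀ ε : ℂ, ε ≠ 0 →
      ε ^ 2 * ((f - g - vε ε) * (f - gcheck - vε ε - δ) * B f
        - (f - g) * (f - gcheck) * Aε ε f) = F ε := by
    intro ε hε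
    rw [hvε ε hε, hAε ε hε, ha₃ ε hε, ha₄ ε hε, hF]
    field_simp
    ring
  have hFcont : Continuous F := by
    apply Continuous.sub
    · exact (((continuous_id.mul continuous_const).add continuous_const).mul
        ((continuous_id.mul continuous_const).add continuous_const)).mul continuous_const
    · exact continuous_const.mul
        (((continuous_id.mul continuous_const).add continuous_const).mul
          ((continuous_id.mul continuous_const).add continuous_const))
  have hF0 : F 0 = B f - (f - g) * (f - gcheck) * (f - a₁) * (f - a₂) := by
    simp [hF]
  have hTend : Tendsto
      (fun ε : ℂ => ε ^ 2 * ((f - g - vε ε) * (f - gcheck - vε ε - δ) * B f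
          - (f - g) * (f - gcheck) * Aε ε f))
      (𝓝[≠] (0 : ℂ))
      (𝓝 (B f - (f - g) * (f - gcheck) * (f - a₁) * (f - a₂))) := by
    have h1 : Tendsto F (𝓝[≠] (0 : ℂ))
        (𝓝 (B f - (f - g) * (f - gcheck) * (f - a₁) * (f - a₂))) := by
      rw [← hF0]
      exact (hFcont.tendsto 0).mono_left nhdsWithin_le_nhds
    refine h1.congr' ?_
    filter_upwards [self_mem_nhdsWithin] with ε hε
    exact (hEq ε hε).symm
  refine ⟨?_, hTend, ?_⟩
  · intro ε hε
    rw [ha₃ ε hε, ha₄ ε hε]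
    ring
  · intro εseq hseq hne heq
    have hseq' : Tendsto εseq atTop (𝓝[≠] (0 : ℂ)) := by
      refine tendsto_nhdsWithin_iff.2 ⟨hseq, Eventually.of_forall fun n => hne n⟩
    have h2 := hTend.comp hseq'
    have h3 : Tendsto (fun _ : ℕ => (0 : ℂ)) atTop
        (𝓝 (B f - (f - g) * (f - gcheck) * (f - a₁) * (f - a₂))) := by
      refine h2.congr fun n => ?_
      simp [Function.comp, heq n]
    have := tendsto_nhds_unique h3 tendsto_const_nhds
    linear_combination -this
end

section
/- For ε ≠ 0 put a₄(ε) = -1/ε, a₃(ε) = -1/ε + a₁ - a₂ + b₁ + b₂ - b₃ + b₄ + δ, v(ε) = a₁ + a₄(ε) - b₃, and A_ε(x) = (x-a₁)(x-a₂)(x-a₃(ε))(x-a₄(ε)). Set u₁ = a₂-b₁-b₂-b₄-δ and u₂ = a₁-b₃. Then lim_{ε→0} ε²·[ (f-g-v(ε))·(f̄-g-v(ε)+δ)·B(g) - (f-g)(f̄-g)·A_ε(g+v(ε)) ] = B(g) - (f-g)(f̄-g)·(g+u₁)(g+u₂). In particular, if along some sequence εₙ → 0 with εₙ ≠ 0 the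 second d-E₇⁽¹⁾ equation (f-g-v(εₙ))(f̄-g-v(εₙ)+δ)·B(g) = (f-g)(f̄-g)·A_{εₙ}(g+v(εₙ)) holds, then the second d-E₆⁽¹⁾ equation (f-g)(f̄-g)·(g+u₁)(g+u₂) = B(g) holds. -/
set_option maxHeartbeats 1000000


open Filter Topology

/-- degeneration of the second d-E₇⁽¹⁾ evolution equation to the second
d-E₆⁽¹⁾ evolution equation in the limit `ε → 0`. -/
theorem dE7_to_dE6_second_equation
    (δ a₁ a₂ b₁ b₂ b₃ b₄ : ℂ) (f g fbar : ℂ)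
    (B : ℂ → ℂ)
    (hB : ∀ x, B x = (x - b₁) * (x - b₂) * (x - b₃) * (x - b₄))
    (u₁ u₂ : ℂ) (hu₁ : u₁ = a₂ - b₁ - b₂ - b₄ - δ) (hu₂ : u₂ = a₁ - b₃)
    (a₃ε a₄ε vε : ℂ → ℂ) (Aε : ℂ → ℂ → ℂ)
    (ha₄ : ∀ ε : ℂ, ε ≠ 0 → a₄ε ε = -1 / ε)
    (ha₃ : ∀ ε : ℂ, ε ≠ 0 → a₃ε ε = -1 / ε + a₁ - a₂ + b₁ + b₂ - b₃ + b₄ + δ)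
    (hvε : ∀ ε : ℂ, ε ≠ 0 → vε ε = a₁ + a₄ε ε - b₃)
    (hAε : ∀ (ε : ℂ), ε ≠ 0 → ∀ x : ℂ,
        Aε ε x = (x - a₁) * (x - a₂) * (x - a₃ε ε) * (x - a₄ε ε)) :
    Tendsto
      (fun ε : ℂ => ε ^ 2 * ((f - g - vε ε) * (fbar - g - vε ε + δ) * B g
          - (f - g) * (fbar - g) * Aε ε (g + vε ε)))
      (𝓝[≠] (0 : ℂ))
      (𝓝 (B g - (f - g) * (fbar - g) * ((g + u₁) * (g + u₂))))
    ∧ (∀ εseq : ℕ → ℂ, Tendsto εseq atTop (𝓝 (0 : ℂ)) → (∀ n, εseq n ≠ 0) →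
        (∀ n, (f - g - vε (εseq n)) * (fbar - g - vε (εseq n) + δ) * B g
            = (f - g) * (fbar - g) * Aε (εseq n) (g + vε (εseq n))) →
        (f - g) * (fbar - g) * ((g + u₁) * (g + u₂)) = B g) := by
  set F : ℂ → ℂ := fun ε =>
    (ε * (f - g - a₁ + b₃) + 1) * (ε * (fbar - g - a₁ + b₃ + δ) + 1) * B g
      - (ε * (g - b₃) - 1) * (ε * (g + a₁ - a₂ - b₃) - 1) *
        ((f - g) * (fbar - g) * ((g + u₁) * (g + u₂))) with hF
  have heq : ∀ ε : ℂ, ε ≠ 0 →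
      ε ^ 2 * ((f - g - vε ε) * (fbar - g - vε ε + δ) * B g
          - (f - g) * (fbar - g) * Aε ε (g + vε ε)) = F ε := by
    intro ε hε
    rw [hF, hAε ε hε, hvε ε hε, ha₄ ε hε, ha₃ ε hε, hu₁, hu₂]
    field_simp
    have h6 : ε * ε * (ε * ε * ε * ε) ≠ 0 := by simp [hε]
    ring
  have hFc : Continuous F := by fun_prop
  have hF0 : F 0 = B g - (f - g) * (fbar - g) * ((g + u₁) * (g + u₂)) := by
    simp [hF]
  have hmain : Tendsto
      (fun ε : ℂ => ε ^ 2 * ((f - g - vε ε) * (fbar - g - vε ε + δ) * B g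
          - (f - g) * (fbar - g) * Aε ε (g + vε ε)))
      (𝓝[≠] (0 : ℂ))
      (𝓝 (B g - (f - g) * (fbar - g) * ((g + u₁) * (g + u₂)))) := by
    have h1 : Tendsto F (𝓝[≠] (0 : ℂ))
        (𝓝 (B g - (f - g) * (fbar - g) * ((g + u₁) * (g + u₂)))) := by
      rw [← hF0]
      exact (hFc.tendsto 0).mono_left nhdsWithin_le_nhds
    refine h1.congr' ?_
    filter_upwards [self_mem_nhdsWithin] with ε hε
    exact (heq ε hε).symm
  refine ⟨hmain, fun εseq hlim hne hEq => ?_⟩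
  have hseq : Tendsto εseq atTop (𝓝[≠] (0 : ℂ)) :=
    tendsto_nhdsWithin_of_tendsto_nhds_of_eventually_within _ hlim
      (Eventually.of_forall hne)
  have h2 : Tendsto (fun n => (εseq n) ^ 2 *
      ((f - g - vε (εseq n)) * (fbar - g - vε (εseq n) + δ) * B g
        - (f - g) * (fbar - g) * Aε (εseq n) (g + vε (εseq n)))) atTop
      (𝓝 (B g - (f - g) * (fbar - g) * ((g + u₁) * (g + u₂)))) :=
    hmain.comp hseq
  have h3 : (fun n => (εseq n) ^ 2 *
      ((f - g - vε (εseq n)) * (fbar - g - vε (εseq n) + δ) * B g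
        - (f - g) * (fbar - g) * Aε (εseq n) (g + vε (εseq n)))) = fun _ => (0 : ℂ) := by
    funext n
    rw [hEq n]
    ring
  rw [h3] at h2
  have h4 := tendsto_nhds_unique h2 tendsto_const_nhds
  linear_combination -h4
end

section
/- For ε ≠ 0 put b₃(ε) = -1/ε, b₄(ε) = -1/(εt), g_ε = -1/(gε), ǧ_ε = -1/(ǧε) and B_ε(x) = (x-b₁)(x-b₂)(x-b₃(ε))(x-b₄(ε)). Then lim_{ε→0} ε²·t·g·ǧ·[ (f-g_ε)(f-ǧ_ε)·(f-a₁)(f-a₂) - B_ε(f) ] = t·(f-a₁)(f-a₂) - g·ǧ·(f-b₁)(f-b₂). In particular, if along some sequence εₙ → 0 with εₙ ≠ 0 the first d-E₆⁽¹⁾ equation (f-g_{εₙ})(f-ǧ_{εₙ})·(f-a₁)(f-a₂) = B_{εₙ}(f) holds, then the first d-D₄⁽¹⁾ equation g·ǧ·(f-b₁)(f-b₂) = t·(f-a₁)(f-a₂) holds. -/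
open Filter Topology

/-- degeneration of the first d-E₆⁽¹⁾ evolution equation to the first
d-D₄⁽¹⁾ evolution equation in the limit `ε → 0`. -/
theorem dE6_to_dD4_first_equation
    (δ a₁ a₂ b₁ b₂ : ℂ) (t : ℂ) (ht : t ≠ 0)
    (f g gcheck : ℂ) (hg : g ≠ 0) (hgcheck : gcheck ≠ 0)
    (b₃ε b₄ε gε gcheckε : ℂ → ℂ) (Bε : ℂ → ℂ → ℂ)
    (hb₃ : ∀ ε : ℂ, ε ≠ 0 → b₃ε ε = -1 / ε)
    (hb₄ : ∀ ε : ℂ, ε ≠ 0 → b₄ε ε = -1 / (ε * t))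
    (hgε : ∀ ε : ℂ, ε ≠ 0 → gε ε = -1 / (g * ε))
    (hgcheckε : ∀ ε : ℂ, ε ≠ 0 → gcheckε ε = -1 / (gcheck * ε))
    (hBε : ∀ (ε : ℂ), ε ≠ 0 → ∀ x : ℂ,
        Bε ε x = (x - b₁) * (x - b₂) * (x - b₃ε ε) * (x - b₄ε ε)) :
    Tendsto
      (fun ε : ℂ => ε ^ 2 * t * g * gcheck
          * ((f - gε ε) * (f - gcheckε ε) * ((f - a₁) * (f - a₂)) - Bε ε f))
      (𝓝[≠] (0 : ℂ))
      (𝓝 (t * ((f - a₁) * (f - a₂)) - g * gcheck * ((f - b₁) * (f - b₂))))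
    ∧ (∀ εseq : ℕ → ℂ, Tendsto εseq atTop (𝓝 (0 : ℂ)) → (∀ n, εseq n ≠ 0) →
        (∀ n, (f - gε (εseq n)) * (f - gcheckε (εseq n)) * ((f - a₁) * (f - a₂))
            = Bε (εseq n) f) →
        g * gcheck * ((f - b₁) * (f - b₂)) = t * ((f - a₁) * (f - a₂))) := by
  set P : ℂ → ℂ := fun ε =>
    t * (g * ε * f + 1) * (gcheck * ε * f + 1) * ((f - a₁) * (f - a₂))
      - g * gcheck * (ε * f + 1) * (t * ε * f + 1) * ((f - b₁) * (f - b₂)) with hP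
  have hEq : ∀ ε : ℂ, ε ≠ 0 →
      ε ^ 2 * t * g * gcheck
        * ((f - gε ε) * (f - gcheckε ε) * ((f - a₁) * (f - a₂)) - Bε ε f) = P ε := by
    intro ε hε
    rw [hBε ε hε, hb₃ ε hε, hb₄ ε hε, hgε ε hε, hgcheckε ε hε, hP]
    field_simp
    ring
  have hPcont : Tendsto P (𝓝 (0 : ℂ))
      (𝓝 (t * ((f - a₁) * (f - a₂)) - g * gcheck * ((f - b₁) * (f - b₂)))) := by
    have : Continuous P := by fun_prop
    have h := this.tendsto 0
    simpa [hP] using h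
  have hmain : Tendsto
      (fun ε : ℂ => ε ^ 2 * t * g * gcheck
          * ((f - gε ε) * (f - gcheckε ε) * ((f - a₁) * (f - a₂)) - Bε ε f))
      (𝓝[≠] (0 : ℂ))
      (𝓝 (t * ((f - a₁) * (f - a₂)) - g * gcheck * ((f - b₁) * (f - b₂)))) := by
    refine Tendsto.congr' ?_ (hPcont.mono_left nhdsWithin_le_nhds)
    filter_upwards [self_mem_nhdsWithin] with ε hε
    exact (hEq ε hε).symm
  refine ⟨hmain, ?_⟩
  intro εseq hseq hne heq
  have hseq' : Tendsto εseq atTop (𝓝[≠] (0 : ℂ)) :=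
    tendsto_nhdsWithin_of_tendsto_nhds_of_eventually_within _ hseq
      (Eventually.of_forall hne)
  have h0 : Tendsto (fun n => (fun ε : ℂ => ε ^ 2 * t * g * gcheck
      * ((f - gε ε) * (f - gcheckε ε) * ((f - a₁) * (f - a₂)) - Bε ε f)) (εseq n))
      atTop (𝓝 (t * ((f - a₁) * (f - a₂)) - g * gcheck * ((f - b₁) * (f - b₂)))) :=
    hmain.comp hseq'
  have h0' : (fun n => (fun ε : ℂ => ε ^ 2 * t * g * gcheck
      * ((f - gε ε) * (f - gcheckε ε) * ((f - a₁) * (f - a₂)) - Bε ε f)) (εseq n))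
      = fun _ => (0 : ℂ) := by
    funext n
    simp [heq n]
  rw [h0'] at h0
  have := tendsto_nhds_unique h0 tendsto_const_nhds
  linear_combination -this
end
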